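/- Let d ≥ 1, let λ, κ ≥ 1 be parameters, let F be an increasing real function with F(x) ≥ 1 for all x ≥ 1, and let G = ([n],[m],E) be a d-left-bounded bipartite graph. Define F̃(x) = (1/d)·exp(32·d⁴·x²·F(2d·x)). Assume H is an increasing real function and L ≥ 1 is a parameter such that H(x) ≥ F̃(x) and H(x) ≥ 2x for all x ≥ L, and assume κ ≥ λ ≥ d·H^{(2d+2)}(L), where H^{(k)} denotes the k-fold iteration of H. Then there exists a set S ⊆ [m] such that deleting the right vertices in S (and their incident edges) produces a bipartite graph containing r pairwise non-connected left neighborhoods each of size at most t, where |S| ≤ r/F(t), r ≥ n/λ, and t ≤ κ. -/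

import Mathlib

open Finset

def tow : ℕ → ℕ
  | 0 => 1
  | x + 1 => 2 ^ tow x

def hw {ι : Type*} [Fintype ι] (x : ι → Bool) : ℕ :=
  (Finset.univ.filter fun i => x i = true).card

def IsLocal {κ ι : Type*} (d : ℕ) (f : (κ → Bool) → ι → Bool) : Prop :=
  ∀ i : ι, ∃ T : Finset κ, T.card ≤ d ∧
    ∀ x y : κ → Bool, (∀ j ∈ T, x j = y j) → f x i = f y i

def IsProductDist {κ : Type*} [Fintype κ] (p : (κ → Bool) → ℝ) : Prop :=
  ∃ γ : κ → ℝ, (∀ j, 0 ≤ γ j ∧ γ j ≤ 1) ∧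
    ∀ x, p x = ∏ j, if x j then γ j else 1 - γ j

def IsDist {α : Type*} [Fintype α] (p : α → ℝ) : Prop :=
  (∀ a, 0 ≤ p a) ∧ ∑ a, p a = 1

noncomputable def push {α β : Type*} [Fintype α] [DecidableEq β] (f : α → β) (p : α → ℝ) :
    β → ℝ :=
  fun b => ∑ a, if f a = b then p a else 0

noncomputable def tv {α : Type*} [Fintype α] (p q : α → ℝ) : ℝ :=
  (1 / 2) * ∑ a, |p a - q a|

noncomputable def biased {ι : Type*} [Fintype ι] (γ : ℝ) (x : ι → Bool) : ℝ :=
  ∏ i, if x i then γ else 1 - γ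

noncomputable def unifParity (ι : Type*) [Fintype ι] [DecidableEq ι] (b : ℕ)
    (y : ι → Bool) : ℝ :=
  if hw y % 2 = b then
    (1 : ℝ) / ((Finset.univ.filter fun z : ι → Bool => hw z % 2 = b).card : ℝ)
  else 0

noncomputable def dHard (n m : ℕ) (p : (Fin n → Bool) × (Fin m → Bool)) : ℝ :=
  biased (1 / 4) p.1 *
    (if hw p.1 % 2 = 1 then (1 / 2 : ℝ) ^ m
     else unifParity (Fin m) ((hw p.1 / 2) % 2) p.2)

def splitFun (n m : ℕ) (z : Fin (n + m) → Bool) : (Fin n → Bool) × (Fin m → Bool) :=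
  (fun i => z (Fin.castAdd m i), fun j => z (Fin.natAdd n j))

noncomputable def dHard' (n m : ℕ) (z : Fin (n + m) → Bool) : ℝ :=
  dHard n m (splitFun n m z)

def wOf {V : Type*} (Z : V → Bool) : Sym2 V → Bool :=
  Sym2.lift ⟨fun u v => xor (Z u) (Z v), fun u v => Bool.xor_comm _ _⟩

def ip {V : Type*} [Fintype V] (Z X : V → Bool) : ℕ :=
  (Finset.univ.filter fun v => Z v = true ∧ X v = true).card

noncomputable def dHost {V : Type*} [Fintype V] [DecidableEq V] (G : SimpleGraph V)
    [DecidableRel G.Adj] (z : (V ⊕ V ⊕ G.edgeSet) → Bool) : ℝ :=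
  let X : V → Bool := fun v => z (Sum.inl v)
  let Y : V → Bool := fun v => z (Sum.inr (Sum.inl v))
  let W : G.edgeSet → Bool := fun e => z (Sum.inr (Sum.inr e))
  biased (1 / 4) X *
    ∑ Z : V → Bool,
      (1 / 2 : ℝ) ^ (Fintype.card V) *
        (if ∀ e : G.edgeSet, W e = wOf Z e.1 then 1 else 0) *
        (if hw X % 2 = 1 then (1 / 2 : ℝ) ^ (Fintype.card V)
         else unifParity V ((ip Z X + hw X / 2) % 2) Y)

def nbhdG {n m : ℕ} (I : Fin n → Finset (Fin m)) (S : Finset (Fin m)) (i : Fin n) :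
    Finset (Fin n) :=
  Finset.univ.filter fun i' => ((I i \ S) ∩ (I i' \ S)).Nonempty

section graphElim

open Finset

variable {n m : ℕ}

/-- Degree of a right vertex. -/
def degR (I : Fin n → Finset (Fin m)) (j : Fin m) : ℕ :=
  (Finset.univ.filter fun i => j ∈ I i).card

/-- Right support of the left neighborhood of `i`. -/
def suppG (I : Fin n → Finset (Fin m)) (S : Finset (Fin m)) (i : Fin n) :
    Finset (Fin m) :=
  (nbhdG I S i).biUnion fun u => I u \ S

lemma nbhdG_anti (I : Fin n → Finset (Fin m)) {S S' : Finset (Fin m)} (h : S ⊆ S')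
    (i : Fin n) : nbhdG I S' i ⊆ nbhdG I S i := by
  intro x hx
  simp only [nbhdG, mem_filter, mem_univ, true_and] at hx ⊢
  obtain ⟨y, hy⟩ := hx
  rw [mem_inter, mem_sdiff, mem_sdiff] at hy
  refine ⟨y, ?_⟩
  rw [mem_inter, mem_sdiff, mem_sdiff]
  exact ⟨⟨hy.1.1, fun hs => hy.1.2 (h hs)⟩, ⟨hy.2.1, fun hs => hy.2.2 (h hs)⟩⟩

lemma suppG_anti (I : Fin n → Finset (Fin m)) {S S' : Finset (Fin m)} (h : S ⊆ S')
    (i : Fin n) : suppG I S' i ⊆ suppG I S i := by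
  intro x hx
  rw [suppG, mem_biUnion] at hx ⊢
  obtain ⟨u, hu, hxu⟩ := hx
  rw [mem_sdiff] at hxu
  exact ⟨u, nbhdG_anti I h i hu,
    mem_sdiff.2 ⟨hxu.1, fun hs => hxu.2 (h hs)⟩⟩

lemma not_mem_suppG (I : Fin n → Finset (Fin m)) {S : Finset (Fin m)} {i : Fin n}
    {x : Fin m} (hx : x ∈ S) : x ∉ suppG I S i := by
  intro hmem
  rw [suppG, mem_biUnion] at hmem
  obtain ⟨u, _, hxu⟩ := hmem
  exact (mem_sdiff.1 hxu).2 hx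

lemma disjoint_of_suppG (I : Fin n → Finset (Fin m)) (S : Finset (Fin m)) {i i' : Fin n}
    (h : Disjoint (suppG I S i) (suppG I S i')) :
    ∀ u ∈ nbhdG I S i, ∀ v ∈ nbhdG I S i', Disjoint (I u \ S) (I v \ S) := by
  intro u hu v hv
  rw [Finset.disjoint_left] at h ⊢
  intro x hxu hxv
  exact h (mem_biUnion.2 ⟨u, hu, hxu⟩) (mem_biUnion.2 ⟨v, hv, hxv⟩)

set_option maxHeartbeats 1000000 in
/-- Core iterative selection lemma. -/
lemma coreElim (I : Fin n → Finset (Fin m)) (A : Finset (Fin n)) (φ : ℝ) (hφ : 1 ≤ φ)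
    (s : ℕ) (hs : 1 ≤ s) :
    ∀ k : ℕ, k ≤ s → ∀ S : Finset (Fin m),
      (∀ a ∈ A, (suppG I S a).card ≤ k) →
      ∃ S' B, S ⊆ S' ∧ B ⊆ A ∧
        (∀ b ∈ B, ∀ b' ∈ B, b ≠ b' → Disjoint (suppG I S' b) (suppG I S' b')) ∧
        (A.card : ℝ) / (8 * s * φ) ^ k ≤ B.card ∧
        (S'.card : ℝ) ≤ S.card + ((B.card : ℝ) - (A.card : ℝ) / (8 * s * φ) ^ k) / (2 * φ) := by
  intro k
  induction k with
  | zero =>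
    intro _ S hA
    refine ⟨S, A, Finset.Subset.rfl, Finset.Subset.rfl, ?_, ?_, ?_⟩
    · intro b hb b' _ _
      have h1 : suppG I S b = ∅ := card_eq_zero.1 (Nat.le_zero.1 (hA b hb))
      rw [h1]
      exact disjoint_empty_left _
    · simp
    · simp
  | succ k ih =>
    intro hks S hA
    classical
    have hs' : (1:ℝ) ≤ (s:ℝ) := by exact_mod_cast hs
    have hsφ : (1:ℝ) ≤ (s:ℝ) * φ := by
      have h := mul_le_mul hs' hφ (by norm_num) (by linarith only [hs'])
      linarith only [h]
    have hρ8 : (8:ℝ) ≤ 8 * (s:ℝ) * φ := by linarith only [hsφ]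
    have hρpos : (0:ℝ) < 8 * (s:ℝ) * φ := by linarith only [hρ8]
    set ρ : ℝ := 8 * (s:ℝ) * φ with hρdef
    have hρpow : ∀ j : ℕ, (0:ℝ) < ρ ^ j := fun j => pow_pos hρpos j
    set fam := (A.powerset).filter (fun C => ∀ b ∈ C, ∀ b' ∈ C, b ≠ b' →
      Disjoint (suppG I S b) (suppG I S b')) with hfam
    obtain ⟨B₀, hB₀mem, hB₀max⟩ :=
      Finset.exists_max_image fam Finset.card ⟨∅, by simp [hfam]⟩
    rw [hfam, mem_filter, mem_powerset] at hB₀mem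
    obtain ⟨hB₀A, hB₀disj⟩ := hB₀mem
    by_cases hcase : (A.card : ℝ) / ρ ^ (k+1) ≤ B₀.card
    · refine ⟨S, B₀, Finset.Subset.rfl, hB₀A, hB₀disj, hcase, ?_⟩
      have h0 : (0:ℝ) ≤ ((B₀.card:ℝ) - (A.card:ℝ) / ρ^(k+1)) / (2*φ) :=
        div_nonneg (by linarith only [hcase]) (by linarith only [hφ])
      linarith only [h0]
    · push_neg at hcase
      set D := B₀.biUnion (fun b => suppG I S b) with hD
      have hDcard : (D.card : ℝ) ≤ (B₀.card : ℝ) * (k+1) := by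
        have h1 : D.card ≤ ∑ b ∈ B₀, (suppG I S b).card := card_biUnion_le
        have h2 : ∑ b ∈ B₀, (suppG I S b).card ≤ ∑ _b ∈ B₀, (k+1) :=
          Finset.sum_le_sum fun b hb => hA b (hB₀A hb)
        have h3 : ∑ _b ∈ B₀, (k+1) = B₀.card * (k+1) := by
          rw [Finset.sum_const, smul_eq_mul]
        have h4 : (D.card : ℕ) ≤ B₀.card * (k+1) := by omega
        exact_mod_cast h4
      have hshrink : ∀ a ∈ A, (suppG I (S ∪ D) a).card ≤ k := by
        intro a ha
        have hsub : suppG I (S ∪ D) a ⊆ suppG I S a :=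
          suppG_anti I Finset.subset_union_left a
        by_cases haB : a ∈ B₀
        · have h0 : suppG I (S ∪ D) a = ∅ := by
            rw [eq_empty_iff_forall_notMem]
            intro x hx
            have hx1 : x ∈ suppG I S a := hsub hx
            have hx2 : x ∈ D := by
              rw [hD, mem_biUnion]; exact ⟨a, haB, hx1⟩
            exact not_mem_suppG I (Finset.mem_union_right S hx2) hx
          rw [h0]; simp
        · have hex : ∃ b ∈ B₀, ¬ Disjoint (suppG I S a) (suppG I S b) := by
            by_contra hc
            push_neg at hc
            have hins : insert a B₀ ∈ fam := by
              rw [hfam, mem_filter, mem_powerset]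
              refine ⟨insert_subset ha hB₀A, ?_⟩
              intro b hb b' hb' hne
              rcases mem_insert.1 hb with hba | hb
              · rcases mem_insert.1 hb' with hba' | hb'
                · rw [hba, hba'] at hne; exact absurd rfl hne
                · rw [hba]; exact hc b' hb'
              · rcases mem_insert.1 hb' with hba' | hb'
                · rw [hba']; exact (hc b hb).symm
                · exact hB₀disj b hb b' hb' hne
            have hle := hB₀max _ hins
            rw [card_insert_of_notMem haB] at hle
            omega
          obtain ⟨b, hb, hnd⟩ := hex
          obtain ⟨x, hxa, hxb⟩ := Finset.not_disjoint_iff.1 hnd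
          have hxD : x ∈ D := by rw [hD, mem_biUnion]; exact ⟨b, hb, hxb⟩
          have hss : suppG I (S ∪ D) a ⊂ suppG I S a := by
            rw [Finset.ssubset_iff_of_subset hsub]
            exact ⟨x, hxa, fun hcon =>
              not_mem_suppG I (Finset.mem_union_right S hxD) hcon⟩
          have h1 := Finset.card_lt_card hss
          have h2 := hA a ha
          omega
      obtain ⟨S', B, hSS', hBA, hdisj, hBcard, hbudget⟩ :=
        ih (by omega) (S ∪ D) hshrink
      refine ⟨S', B, Finset.subset_union_left.trans hSS', hBA, hdisj, ?_, ?_⟩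
      · have h1 : (A.card:ℝ)/ρ^(k+1) ≤ (A.card:ℝ)/ρ^k :=
          div_le_div_of_nonneg_left (Nat.cast_nonneg _) (hρpow k)
            (pow_le_pow_right₀ (by linarith only [hρ8]) (Nat.le_succ k))
        linarith only [h1, hBcard]
      · have hcards : ((S ∪ D).card : ℝ) ≤ (S.card : ℝ) + D.card := by
          exact_mod_cast card_union_le S D
        set T1 : ℝ := (A.card:ℝ)/ρ^(k+1) with hT1
        have hT0 : (A.card:ℝ)/ρ^k = T1 * ρ := by
          rw [hT1, pow_succ]
          field_simp
        have hT1pos : 0 ≤ T1 := div_nonneg (Nat.cast_nonneg _) (le_of_lt (hρpow _))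
        have hB₀le : (B₀.card : ℝ) ≤ T1 := le_of_lt hcase
        have hk1 : ((k:ℝ)+1) ≤ (s:ℝ) := by exact_mod_cast hks
        have hφpos : (0:ℝ) < 2*φ := by linarith only [hφ]
        have hkey : (D.card : ℝ) * (2*φ) ≤ T1 * ρ - T1 := by
          have h2 : (D.card:ℝ) ≤ T1 * ((k:ℝ)+1) := by
            have hm := mul_le_mul_of_nonneg_right hB₀le
              (show (0:ℝ) ≤ (k:ℝ)+1 by positivity)
            linarith only [hDcard, hm]
          have h3 : ((k:ℝ)+1)*(2*φ) ≤ ρ - 1 := by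
            rw [hρdef]
            have hm1 : ((k:ℝ)+1)*(2*φ) ≤ (s:ℝ)*(2*φ) :=
              mul_le_mul_of_nonneg_right hk1 (by linarith only [hφ])
            linarith only [hm1, hsφ]
          have hp1 := mul_le_mul_of_nonneg_right h2 (le_of_lt hφpos)
          have hp2 := mul_le_mul_of_nonneg_left h3 hT1pos
          linarith only [hp1, hp2]
        have h4 : (D.card:ℝ) ≤ (T1*ρ - T1)/(2*φ) := (le_div_iff₀ hφpos).2 hkey
        have h5 : ((B.card:ℝ) - T1*ρ)/(2*φ) + (T1*ρ - T1)/(2*φ)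
            = ((B.card:ℝ) - T1)/(2*φ) := by
          rw [← add_div]; ring_nf
        rw [hT0] at hbudget
        linarith only [hbudget, hcards, h4, h5]
end graphElim

set_option maxHeartbeats 4000000 in
theorem stmt17 (d n m : ℕ) (hd : 1 ≤ d) (lam kap : ℝ) (hlam : 1 ≤ lam) (hkap : 1 ≤ kap)
    (F : ℝ → ℝ) (hF : Monotone F) (hF1 : ∀ x : ℝ, 1 ≤ x → 1 ≤ F x)
    (I : Fin n → Finset (Fin m)) (hI : ∀ i, (I i).card ≤ d)
    (H : ℝ → ℝ) (hH : Monotone H) (L : ℝ) (hL : 1 ≤ L)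
    (hHF : ∀ x : ℝ, L ≤ x →
      (1 / (d : ℝ)) * Real.exp (32 * (d : ℝ) ^ 4 * x ^ 2 * F (2 * (d : ℝ) * x)) ≤ H x)
    (hH2 : ∀ x : ℝ, L ≤ x → 2 * x ≤ H x)
    (hkl : lam ≤ kap) (hlb : (d : ℝ) * H^[2 * d + 2] L ≤ lam) :
    ∃ (S : Finset (Fin m)) (r t : ℕ) (idx : Fin r → Fin n),
      Function.Injective idx ∧
      (∀ j j' : Fin r, j ≠ j' →
        ∀ u ∈ nbhdG I S (idx j), ∀ v ∈ nbhdG I S (idx j'),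
          Disjoint (I u \ S) (I v \ S)) ∧
      (∀ j : Fin r, (nbhdG I S (idx j)).card ≤ t) ∧
      (S.card : ℝ) ≤ (r : ℝ) / F (t : ℝ) ∧ (n : ℝ) / lam ≤ (r : ℝ) ∧ (t : ℝ) ≤ kap := by
  classical
  have hd1 : (1:ℝ) ≤ d := by exact_mod_cast hd
  have hdpos : (0:ℝ) < d := by linarith only [hd1]
  -- the threshold sequence
  set θ : ℕ → ℝ := fun k => H^[k] L with hθdef
  have hθsucc : ∀ k, θ (k+1) = H (θ k) := by
    intro k
    rw [hθdef]
    exact Function.iterate_succ_apply' H k L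
  have hθL : ∀ k, L ≤ θ k := by
    intro k
    induction k with
    | zero => rw [hθdef]; exact le_refl _
    | succ k ihk =>
      have h2 := hH2 (θ k) ihk
      have h3 : (1:ℝ) ≤ θ k := le_trans hL ihk
      rw [hθsucc]
      linarith only [h2, h3, ihk]
  have hθ1 : ∀ k, (1:ℝ) ≤ θ k := fun k => le_trans hL (hθL k)
  have hθstep : ∀ k, θ k ≤ θ (k+1) := by
    intro k
    rw [hθsucc]
    have h2 := hH2 (θ k) (hθL k)
    have h3 := hθ1 k
    linarith only [h2, h3]
  have hθmono : Monotone θ := monotone_nat_of_le_succ hθstep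
  clear_value θ
  -- total degree
  have hdegsum : ∑ j : Fin m, degR I j = ∑ i : Fin n, (I i).card := by
    unfold degR
    simp_rw [Finset.card_filter]
    rw [Finset.sum_comm]
    refine Finset.sum_congr rfl fun i _ => ?_
    rw [← Finset.card_filter]
    congr 1
    exact Finset.filter_univ_mem _
  have hItot : ∑ i : Fin n, (I i).card ≤ n * d := by
    calc ∑ i : Fin n, (I i).card ≤ ∑ _i : Fin n, d := Finset.sum_le_sum fun i _ => hI i
      _ = n * d := by rw [Finset.sum_const, smul_eq_mul, Finset.card_univ, Fintype.card_fin]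
  have hdegtot : ((∑ j : Fin m, degR I j : ℕ) : ℝ) ≤ (n:ℝ) * d := by
    rw [hdegsum]
    exact_mod_cast hItot
  -- bands and pigeonhole
  set band : ℕ → Finset (Fin m) := fun k =>
    Finset.univ.filter (fun j => θ k < (degR I j : ℝ) ∧ (degR I j : ℝ) ≤ θ (k+1))
    with hbanddef
  have hbandmem : ∀ k j, j ∈ band k ↔ θ k < (degR I j : ℝ) ∧ (degR I j : ℝ) ≤ θ (k+1) := by
    intro k j
    rw [hbanddef]
    simp
  clear_value band
  have hbanddisj : ∀ (a : ℕ), a ∈ (Finset.range (2*d+2) : Finset ℕ) →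
      ∀ b ∈ (Finset.range (2*d+2) : Finset ℕ), a ≠ b →
      Disjoint (band a) (band b) := by
    have key : ∀ a b : ℕ, a < b → Disjoint (band a) (band b) := by
      intro a b hab
      rw [Finset.disjoint_left]
      intro j hja hjb
      rw [hbandmem] at hja hjb
      have h1 : θ (a+1) ≤ θ b := hθmono hab
      linarith only [hja.2, hjb.1, h1]
    intro a _ b _ hab
    rcases lt_or_gt_of_ne hab with h | h
    · exact key a b h
    · exact (key b a h).symm
  have hsum_bands :
      ((∑ k ∈ Finset.range (2*d+2), ∑ j ∈ band k, degR I j : ℕ) : ℝ) ≤ (n:ℝ) * d := by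
    have h1 : ∑ k ∈ Finset.range (2*d+2), ∑ j ∈ band k, degR I j
        = ∑ j ∈ (Finset.range (2*d+2)).biUnion band, degR I j := by
      rw [Finset.sum_biUnion]
      intro a ha b hb hab
      exact hbanddisj a ha b hb hab
    have h2 : ∑ j ∈ (Finset.range (2*d+2)).biUnion band, degR I j
        ≤ ∑ j : Fin m, degR I j :=
      Finset.sum_le_sum_of_subset (Finset.subset_univ _)
    calc ((∑ k ∈ Finset.range (2*d+2), ∑ j ∈ band k, degR I j : ℕ) : ℝ)
        ≤ ((∑ j : Fin m, degR I j : ℕ) : ℝ) := by rw [h1]; exact_mod_cast h2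
      _ ≤ (n:ℝ) * d := hdegtot
  have hpig : ∃ k, k < 2*d+2 ∧
      ((∑ j ∈ band k, degR I j : ℕ) : ℝ) ≤ (d:ℝ)*n/(2*(d:ℝ)+2) := by
    by_contra hc
    push_neg at hc
    have hlt : ∀ k ∈ Finset.range (2*d+2),
        (d:ℝ)*n/(2*(d:ℝ)+2) < ((∑ j ∈ band k, degR I j : ℕ) : ℝ) := by
      intro k hk
      exact hc k (Finset.mem_range.1 hk)
    have hne : (Finset.range (2*d+2)).Nonempty := by
      refine ⟨0, Finset.mem_range.2 ?_⟩
      omega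
    have hstrict := Finset.sum_lt_sum_of_nonempty hne hlt
    rw [Finset.sum_const, Finset.card_range, nsmul_eq_mul] at hstrict
    have hcast : ((2*d+2 : ℕ) : ℝ) = 2*(d:ℝ)+2 := by push_cast; ring
    rw [hcast] at hstrict
    have heq : (2*(d:ℝ)+2) * ((d:ℝ)*n/(2*(d:ℝ)+2)) = (d:ℝ)*n := by
      field_simp
    rw [heq] at hstrict
    have hsum' : (∑ k ∈ Finset.range (2*d+2), ((∑ j ∈ band k, degR I j : ℕ) : ℝ))
        = ((∑ k ∈ Finset.range (2*d+2), ∑ j ∈ band k, degR I j : ℕ) : ℝ) := by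
      push_cast
      ring
    rw [hsum'] at hstrict
    linarith only [hsum_bands, hstrict]
  obtain ⟨k₀, hk₀lt, hmass⟩ := hpig
  set θ₀ : ℝ := θ k₀ with hθ₀def
  set Θ : ℝ := θ (k₀+1) with hΘdef
  have hθ₀1 : (1:ℝ) ≤ θ₀ := hθ1 k₀
  have hΘ1 : (1:ℝ) ≤ Θ := hθ1 (k₀+1)
  have hΘpos : (0:ℝ) < Θ := by linarith only [hΘ1]
  clear_value θ₀ Θ
  -- deletion of heavy vertices
  set S₁ : Finset (Fin m) := Finset.univ.filter (fun j => Θ < (degR I j : ℝ)) with hS₁def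
  have hS₁bound : (S₁.card : ℝ) * Θ ≤ (n:ℝ) * d := by
    have h1 : ∀ j ∈ S₁, Θ ≤ (degR I j : ℝ) := by
      intro j hj
      rw [hS₁def, Finset.mem_filter] at hj
      exact le_of_lt hj.2
    have h2 : (S₁.card : ℝ) * Θ = ∑ _j ∈ S₁, Θ := by
      rw [Finset.sum_const, nsmul_eq_mul]
    have h3 : ∑ j ∈ S₁, Θ ≤ ∑ j ∈ S₁, (degR I j : ℝ) := Finset.sum_le_sum h1
    have h4 : ∑ j ∈ S₁, (degR I j : ℝ) ≤ ∑ j : Fin m, (degR I j : ℝ) :=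
      Finset.sum_le_sum_of_subset_of_nonneg (Finset.subset_univ _)
        (fun j _ _ => Nat.cast_nonneg _)
    have h5 : ∑ j : Fin m, (degR I j : ℝ) = ((∑ j : Fin m, degR I j : ℕ) : ℝ) := by
      push_cast
      ring
    rw [h2]
    rw [h5] at h4
    linarith only [h3, h4, hdegtot]
  -- candidates
  set A : Finset (Fin n) := Finset.univ.filter
    (fun i => ∀ j ∈ I i, (degR I j : ℝ) ≤ θ₀ ∨ Θ < (degR I j : ℝ)) with hAdef
  have hAcard : (n : ℝ) ≤ 2 * A.card := by
    have hsub : Finset.univ \ A ⊆ (band k₀).biUnion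
        (fun j => Finset.univ.filter fun i => j ∈ I i) := by
      intro i hi
      rw [Finset.mem_sdiff] at hi
      have hiA : i ∉ A := hi.2
      rw [hAdef, Finset.mem_filter] at hiA
      push_neg at hiA
      obtain ⟨j, hjI, hj1, hj2⟩ := hiA (Finset.mem_univ i)
      rw [Finset.mem_biUnion]
      refine ⟨j, ?_, ?_⟩
      · rw [hbandmem, ← hθ₀def, ← hΘdef]
        exact ⟨hj1, hj2⟩
      · rw [Finset.mem_filter]
        exact ⟨Finset.mem_univ _, hjI⟩
    have hc1 : (Finset.univ \ A).card ≤ ∑ j ∈ band k₀, degR I j := by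
      calc (Finset.univ \ A).card
          ≤ ((band k₀).biUnion (fun j => Finset.univ.filter fun i => j ∈ I i)).card :=
            Finset.card_le_card hsub
        _ ≤ ∑ j ∈ band k₀, (Finset.univ.filter fun i => j ∈ I i).card :=
            Finset.card_biUnion_le
        _ = ∑ j ∈ band k₀, degR I j := rfl
    have hAn : A.card ≤ n := by
      calc A.card ≤ Finset.univ.card := Finset.card_le_univ A
        _ = n := by rw [Finset.card_univ, Fintype.card_fin]
    have hc2 : (Finset.univ \ A).card = n - A.card := by
      rw [Finset.card_sdiff_of_subset (Finset.subset_univ A), Finset.card_univ, Fintype.card_fin]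
    have hc3 : ((n - A.card : ℕ) : ℝ) ≤ (d:ℝ)*n/(2*(d:ℝ)+2) := by
      rw [← hc2]
      exact le_trans (by exact_mod_cast hc1) hmass
    have hc4 : ((n - A.card : ℕ) : ℝ) = (n:ℝ) - A.card := by
      push_cast [Nat.cast_sub hAn]
      ring
    have hn0 : (0:ℝ) ≤ n := Nat.cast_nonneg n
    have hc5 : (d:ℝ)*n/(2*(d:ℝ)+2) ≤ (n:ℝ)/2 := by
      rw [div_le_div_iff₀ (by linarith only [hd1]) (by norm_num)]
      linarith only [hn0]
    rw [hc4] at hc3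
    linarith only [hc3, hc5]
  clear_value S₁ A
  -- the numbers t, s, φ
  set t : ℕ := d * ⌊θ₀⌋₊ with htdef
  have hfl1 : 1 ≤ ⌊θ₀⌋₊ := by
    have h : ((1:ℕ):ℝ) ≤ θ₀ := by exact_mod_cast hθ₀1
    exact Nat.le_floor h
  have ht1 : 1 ≤ t := by
    rw [htdef]
    calc 1 = 1 * 1 := by ring
      _ ≤ d * ⌊θ₀⌋₊ := Nat.mul_le_mul hd hfl1
  have htle : (t:ℝ) ≤ (d:ℝ) * θ₀ := by
    rw [htdef]
    push_cast
    exact mul_le_mul_of_nonneg_left (Nat.floor_le (by linarith only [hθ₀1]))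
      (by positivity)
  clear_value t
  set sN : ℕ := d * t with hsNdef
  have hsN1 : 1 ≤ sN := by
    rw [hsNdef]
    calc 1 = 1 * 1 := by ring
      _ ≤ d * t := Nat.mul_le_mul hd ht1
  have hsle : (sN:ℝ) ≤ (d:ℝ)^2 * θ₀ := by
    rw [hsNdef]
    push_cast
    have hm := mul_le_mul_of_nonneg_left htle (le_of_lt hdpos)
    linarith only [hm]
  clear_value sN
  set φ : ℝ := F (2*(d:ℝ)*θ₀) with hφdef
  have hφ1 : (1:ℝ) ≤ φ := by
    rw [hφdef]
    refine hF1 _ ?_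
    have hm := mul_le_mul hd1 hθ₀1 (by norm_num) (by linarith only [hd1])
    linarith only [hm]
  clear_value φ
  -- neighborhood and support bounds for candidates
  have hnb : ∀ S : Finset (Fin m), S₁ ⊆ S → ∀ i ∈ A, (nbhdG I S i).card ≤ t := by
    intro S hS i hi
    have hsub : nbhdG I S i ⊆ (I i \ S).biUnion
        (fun x => Finset.univ.filter fun i' => x ∈ I i') := by
      intro i' hi'
      rw [nbhdG, Finset.mem_filter] at hi'
      obtain ⟨x, hx⟩ := hi'.2
      rw [Finset.mem_inter] at hx
      rw [Finset.mem_biUnion]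
      exact ⟨x, hx.1, Finset.mem_filter.2 ⟨Finset.mem_univ _, (Finset.mem_sdiff.1 hx.2).1⟩⟩
    calc (nbhdG I S i).card
        ≤ ((I i \ S).biUnion (fun x => Finset.univ.filter fun i' => x ∈ I i')).card :=
          Finset.card_le_card hsub
      _ ≤ ∑ x ∈ I i \ S, (Finset.univ.filter fun i' => x ∈ I i').card :=
          Finset.card_biUnion_le
      _ ≤ ∑ _x ∈ I i \ S, ⌊θ₀⌋₊ := by
          refine Finset.sum_le_sum fun x hx => ?_
          rw [Finset.mem_sdiff] at hx
          have hx1 : x ∉ S₁ := fun h => hx.2 (hS h)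
          rw [hS₁def, Finset.mem_filter] at hx1
          push_neg at hx1
          have hxΘ : (degR I x : ℝ) ≤ Θ := hx1 (Finset.mem_univ x)
          rw [hAdef, Finset.mem_filter] at hi
          rcases hi.2 x hx.1 with h | h
          · exact Nat.le_floor h
          · exact absurd h (not_lt.2 hxΘ)
      _ = (I i \ S).card * ⌊θ₀⌋₊ := by rw [Finset.sum_const, smul_eq_mul]
      _ ≤ d * ⌊θ₀⌋₊ :=
          Nat.mul_le_mul_right _
            (le_trans (Finset.card_le_card (Finset.sdiff_subset)) (hI i))
      _ = t := by rw [htdef]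
  have hsb : ∀ S : Finset (Fin m), S₁ ⊆ S → ∀ i ∈ A, (suppG I S i).card ≤ sN := by
    intro S hS i hi
    calc (suppG I S i).card ≤ ∑ u ∈ nbhdG I S i, (I u \ S).card := Finset.card_biUnion_le
      _ ≤ ∑ _u ∈ nbhdG I S i, d := Finset.sum_le_sum fun u _ =>
          le_trans (Finset.card_le_card (Finset.sdiff_subset)) (hI u)
      _ = (nbhdG I S i).card * d := by rw [Finset.sum_const, smul_eq_mul]
      _ ≤ t * d := Nat.mul_le_mul_right _ (hnb S hS i hi)
      _ = sN := by rw [hsNdef, Nat.mul_comm]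
  -- apply the core lemma
  obtain ⟨S', B, hS₁S', hBA, hdisj, hBcard, hbudget⟩ :=
    coreElim I A φ hφ1 sN hsN1 sN le_rfl S₁ (hsb S₁ Finset.Subset.rfl)
  set ρ : ℝ := 8 * (sN:ℝ) * φ with hρdef
  have hsN1' : (1:ℝ) ≤ (sN:ℝ) := by exact_mod_cast hsN1
  have hρ8 : (8:ℝ) ≤ ρ := by
    rw [hρdef]
    have hmul : (1:ℝ)*1 ≤ (sN:ℝ)*φ :=
      mul_le_mul hsN1' hφ1 (by norm_num) (by linarith only [hsN1'])
    linarith only [hmul]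
  have hρpos : (0:ℝ) < ρ := by linarith only [hρ8]
  have hρpow : (0:ℝ) < ρ ^ sN := pow_pos hρpos sN
  clear_value ρ
  -- the exponential bounds
  set M : ℝ := (d:ℝ)^4 * θ₀^2 * φ with hMdef
  clear_value M
  have hθ₀0 : (0:ℝ) ≤ θ₀ := by linarith only [hθ₀1]
  have hθsq : (1:ℝ) ≤ θ₀^2 := by
    have h := mul_le_mul hθ₀1 hθ₀1 (by norm_num) hθ₀0
    calc (1:ℝ) = 1*1 := by ring
      _ ≤ θ₀*θ₀ := h
      _ = θ₀^2 := by ring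
  have hd2' : (1:ℝ) ≤ (d:ℝ)^2 := by
    have h := mul_le_mul hd1 hd1 (by norm_num) (by linarith only [hd1])
    calc (1:ℝ) = 1*1 := by ring
      _ ≤ (d:ℝ)*(d:ℝ) := h
      _ = (d:ℝ)^2 := by ring
  have hd4 : (1:ℝ) ≤ (d:ℝ)^4 := by
    have h := mul_le_mul hd2' hd2' (by norm_num) (by positivity)
    calc (1:ℝ) = 1*1 := by ring
      _ ≤ (d:ℝ)^2*(d:ℝ)^2 := h
      _ = (d:ℝ)^4 := by ring
  have hd4θ : (1:ℝ) ≤ (d:ℝ)^4*θ₀^2 := by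
    have h := mul_le_mul hd4 hθsq (by norm_num) (by positivity)
    calc (1:ℝ) = 1*1 := by ring
      _ ≤ (d:ℝ)^4*θ₀^2 := h
  have hM1 : (1:ℝ) ≤ M := by
    rw [hMdef]
    have h := mul_le_mul hd4θ hφ1 (by norm_num) (by linarith only [hd4θ])
    calc (1:ℝ) = 1*1 := by ring
      _ ≤ ((d:ℝ)^4*θ₀^2)*φ := h
  have hexpM : M + 1 ≤ Real.exp M := Real.add_one_le_exp M
  have hexp : Real.exp (32 * M) ≤ (d:ℝ) * Θ := by
    have h1 := hHF θ₀ (by rw [hθ₀def]; exact hθL k₀)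
    have h2 : 32 * M = 32 * (d:ℝ)^4 * θ₀^2 * F (2*(d:ℝ)*θ₀) := by
      rw [hMdef, hφdef]; ring
    have h3 : Θ = H θ₀ := by rw [hΘdef, hθ₀def]; exact hθsucc k₀
    rw [h2, h3]
    calc Real.exp (32 * (d:ℝ)^4 * θ₀^2 * F (2*(d:ℝ)*θ₀))
        = (d:ℝ) * ((1/(d:ℝ)) * Real.exp (32 * (d:ℝ)^4 * θ₀^2 * F (2*(d:ℝ)*θ₀))) := by
          rw [one_div, mul_inv_cancel_left₀ (ne_of_gt hdpos)]
      _ ≤ (d:ℝ) * H θ₀ := mul_le_mul_of_nonneg_left h1 (le_of_lt hdpos)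
  have hstep1 : ρ ≤ Real.exp (8*(sN:ℝ)*φ) := by
    have h := Real.add_one_le_exp (8*(sN:ℝ)*φ)
    rw [hρdef]
    linarith only [h]
  have hstep2 : ρ^sN ≤ Real.exp (8*M) := by
    have h0 : (0:ℝ) ≤ ρ := le_of_lt hρpos
    calc ρ^sN ≤ (Real.exp (8*(sN:ℝ)*φ))^sN := pow_le_pow_left₀ h0 hstep1 sN
      _ = Real.exp ((sN:ℝ) * (8*(sN:ℝ)*φ)) := (Real.exp_nat_mul _ sN).symm
      _ ≤ Real.exp (8*M) := by
          apply Real.exp_le_exp.2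
          rw [hMdef]
          have hsq : (sN:ℝ) * (sN:ℝ) ≤ ((d:ℝ)^2*θ₀) * ((d:ℝ)^2*θ₀) :=
            mul_le_mul hsle hsle (Nat.cast_nonneg _)
              (mul_nonneg (by positivity) hθ₀0)
          have hm := mul_le_mul_of_nonneg_left hsq
            (show (0:ℝ) ≤ 8*φ by linarith only [hφ1])
          linarith only [hm]
  have h2M : (2:ℝ) ≤ Real.exp M := by linarith only [hexpM, hM1]
  have hθφ : (1:ℝ) ≤ θ₀^2*φ := by
    have h := mul_le_mul hθsq hφ1 (by norm_num) (by positivity)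
    calc (1:ℝ) = 1*1 := by ring
      _ ≤ θ₀^2*φ := h
  have hMge : (d:ℝ)^4 ≤ M := by
    rw [hMdef]
    have h := mul_le_mul_of_nonneg_left hθφ (show (0:ℝ) ≤ (d:ℝ)^4 by positivity)
    linarith only [h]
  have hdd4 : (d:ℝ) ≤ (d:ℝ)^4 := by
    have h1 : (d:ℝ)*1 ≤ (d:ℝ)*(d:ℝ) :=
      mul_le_mul_of_nonneg_left hd1 (le_of_lt hdpos)
    have h2 : (d:ℝ)^2*1 ≤ (d:ℝ)^2*(d:ℝ)^2 :=
      mul_le_mul_of_nonneg_left hd2' (by positivity)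
    nlinarith only [h1, h2]
  have hdM : (d:ℝ) ≤ M := le_trans hdd4 hMge
  have hφM : φ ≤ M := by
    rw [hMdef]
    have h := mul_le_mul_of_nonneg_right hd4θ (show (0:ℝ) ≤ φ by linarith only [hφ1])
    linarith only [h]
  have hd2exp : (d:ℝ)^2 ≤ Real.exp (2*M) := by
    have h1 : (d:ℝ) ≤ Real.exp M := by linarith only [hdM, hexpM]
    calc (d:ℝ)^2 ≤ (Real.exp M)^2 := pow_le_pow_left₀ (le_of_lt hdpos) h1 2
      _ = Real.exp (2*M) := by
          rw [sq, ← Real.exp_add]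
          ring_nf
  have hφexp : φ ≤ Real.exp M := by linarith only [hφM, hexpM]
  have hkey : 2*(d:ℝ)^2*φ*ρ^sN ≤ Real.exp (32*M) := by
    have hA1 : (2:ℝ)*(d:ℝ)^2 ≤ Real.exp M * Real.exp (2*M) :=
      mul_le_mul h2M hd2exp (by positivity) (le_of_lt (Real.exp_pos M))
    have hA2 : (2:ℝ)*(d:ℝ)^2*φ ≤ Real.exp M * Real.exp (2*M) * Real.exp M :=
      mul_le_mul hA1 hφexp (by linarith only [hφ1]) (by positivity)
    have hA3 : 2*(d:ℝ)^2*φ*ρ^sN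
        ≤ Real.exp M * Real.exp (2*M) * Real.exp M * Real.exp (8*M) :=
      mul_le_mul hA2 hstep2 (le_of_lt hρpow) (by positivity)
    calc 2*(d:ℝ)^2*φ*ρ^sN
        ≤ Real.exp M * Real.exp (2*M) * Real.exp M * Real.exp (8*M) := hA3
      _ = Real.exp (M + 2*M + M + 8*M) := by
          rw [Real.exp_add, Real.exp_add, Real.exp_add]
      _ ≤ Real.exp (32*M) := Real.exp_le_exp.2 (by linarith only [hM1])
  have h2dρ : 2*(d:ℝ)*φ*ρ^sN ≤ Θ := by
    have h1 : (d:ℝ) * (2*(d:ℝ)*φ*ρ^sN) ≤ (d:ℝ) * Θ := by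
      calc (d:ℝ)*(2*(d:ℝ)*φ*ρ^sN) = 2*(d:ℝ)^2*φ*ρ^sN := by ring
        _ ≤ Real.exp (32*M) := hkey
        _ ≤ (d:ℝ)*Θ := hexp
    exact le_of_mul_le_mul_left h1 hdpos
  have hθtopd : (d:ℝ) * Θ ≤ lam := by
    have h1 : Θ ≤ θ (2*d+2) := by
      rw [hΘdef]
      exact hθmono (by omega)
    have h2 : (d:ℝ) * θ (2*d+2) ≤ lam := by
      have h3 : θ (2*d+2) = H^[2*d+2] L := by rw [hθdef]
      rw [h3]
      exact hlb
    have hm := mul_le_mul_of_nonneg_left h1 (le_of_lt hdpos)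
    linarith only [hm, h2]
  -- conclude
  have hrl : 2*ρ^sN ≤ lam := by
    have hd2φ : (1:ℝ) ≤ (d:ℝ)^2*φ := by
      have h := mul_le_mul hd2' hφ1 (by norm_num) (by positivity)
      calc (1:ℝ) = 1*1 := by ring
        _ ≤ (d:ℝ)^2*φ := h
    have h1 : 2*ρ^sN ≤ 2*(d:ℝ)^2*φ*ρ^sN := by
      have h := mul_le_mul_of_nonneg_left hd2φ
        (show (0:ℝ) ≤ 2*ρ^sN by linarith only [hρpow])
      nlinarith only [h]
    linarith only [h1, hkey, hexp, hθtopd]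
  have hS₁T : (S₁.card:ℝ)*φ ≤ (A.card:ℝ)/ρ^sN := by
    rw [le_div_iff₀ hρpow]
    have h1 : (S₁.card:ℝ)*(2*(d:ℝ)*φ*ρ^sN) ≤ (S₁.card:ℝ)*Θ :=
      mul_le_mul_of_nonneg_left h2dρ (Nat.cast_nonneg _)
    have h2 : (d:ℝ)*(2*((S₁.card:ℝ)*φ*ρ^sN)) ≤ (d:ℝ)*(n:ℝ) := by
      nlinarith only [h1, hS₁bound]
    have h3 : 2*((S₁.card:ℝ)*φ*ρ^sN) ≤ (n:ℝ) := le_of_mul_le_mul_left h2 hdpos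
    nlinarith only [h3, hAcard]
  have hFt1 : (1:ℝ) ≤ F (t:ℝ) := hF1 _ (by exact_mod_cast ht1)
  have hFtφ : F (t:ℝ) ≤ φ := by
    rw [hφdef]
    apply hF
    have h0 : (0:ℝ) ≤ (d:ℝ)*θ₀ := mul_nonneg (le_of_lt hdpos) hθ₀0
    linarith only [htle, h0]
  -- assemble the answer
  refine ⟨S', B.card, t, fun j => B.orderEmbOfFin rfl j, ?_, ?_, ?_, ?_, ?_, ?_⟩
  · intro a b hab
    exact (B.orderEmbOfFin rfl).injective hab
  · intro j j' hne u hu v hv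
    have hbj : B.orderEmbOfFin rfl j ∈ B := B.orderEmbOfFin_mem rfl j
    have hbj' : B.orderEmbOfFin rfl j' ∈ B := B.orderEmbOfFin_mem rfl j'
    have hne' : B.orderEmbOfFin rfl j ≠ B.orderEmbOfFin rfl j' := by
      intro h
      exact hne ((B.orderEmbOfFin rfl).injective h)
    exact disjoint_of_suppG I S' (hdisj _ hbj _ hbj' hne') u hu v hv
  · intro j
    exact hnb S' hS₁S' _ (hBA (B.orderEmbOfFin_mem rfl j))
  · -- deletion bound
    rw [le_div_iff₀ (by linarith only [hFt1] : (0:ℝ) < F (t:ℝ))]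
    have hb1 : (S'.card:ℝ)*F (t:ℝ) ≤ (S'.card:ℝ)*φ :=
      mul_le_mul_of_nonneg_left hFtφ (Nat.cast_nonneg _)
    have hb2 : (S'.card:ℝ)*φ
        ≤ ((S₁.card:ℝ) + ((B.card:ℝ) - (A.card:ℝ)/ρ^sN)/(2*φ))*φ :=
      mul_le_mul_of_nonneg_right hbudget (by linarith only [hφ1])
    have hφne : φ ≠ 0 := by
      intro h
      rw [h] at hφ1
      norm_num at hφ1
    have hb3 : ((S₁.card:ℝ) + ((B.card:ℝ) - (A.card:ℝ)/ρ^sN)/(2*φ))*φ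
        = (S₁.card:ℝ)*φ + ((B.card:ℝ) - (A.card:ℝ)/ρ^sN)/2 := by
      field_simp
    rw [hb3] at hb2
    linarith only [hb1, hb2, hS₁T, hBcard]
  · -- size bound
    have h1 : (n:ℝ)/lam ≤ (n:ℝ)/(2*ρ^sN) :=
      div_le_div_of_nonneg_left (Nat.cast_nonneg n)
        (by linarith only [hρpow]) hrl
    have h2 : (n:ℝ)/(2*ρ^sN) ≤ (A.card:ℝ)/ρ^sN := by
      rw [div_le_div_iff₀ (by linarith only [hρpow]) hρpow]
      have hm := mul_le_mul_of_nonneg_right hAcard (le_of_lt hρpow)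
      nlinarith only [hm]
    linarith only [h1, h2, hBcard]
  · -- t bound
    have h1 : (d:ℝ)*θ₀ ≤ (d:ℝ)*θ (2*d+2) := by
      have hm := hθmono (show k₀ ≤ 2*d+2 by omega)
      rw [hθ₀def]
      exact mul_le_mul_of_nonneg_left hm (le_of_lt hdpos)
    have h2 : (d:ℝ) * θ (2*d+2) ≤ lam := by
      have h3 : θ (2*d+2) = H^[2*d+2] L := by rw [hθdef]
      rw [h3]
      exact hlb
    linarith only [htle, h1, h2, hkl]
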